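/- arXiv:2305.08812 — 9 statements merged into one kernel-verified Lean document; each statement's English description precedes it below -/
import Mathlib

section
/- Same Longitudinal Safety (Theorem 1): Let x1_k, v1_k, x2_k, v2_k (k = 0,…,n) be finite sequences of reals such that for every k < n there exist accelerations a1_k, a2_k and a duration t_k with 0 ≤ t_k ≤ ρ satisfying: either (free driving) safeDist_s(v1_k, v2_k) ≤ x2_k − x1_k and −a_maxBrake ≤ a1_k ≤ a_maxAccel and −a_maxBrake ≤ a2_k ≤ a_maxAccel, or (proper response) safeDist_s(v1_k, v2_k) ≥ x2_k − x1_k and (a1_k ≤ −a_minBrake or (v1_k = 0 and a1_k = 0)) and (a2_k ≥ −a_maxBrake or (v2_k = 0 and a2_k = 0)); moreover v1_k + a1_k·s ≥ 0 and v2_k + a2_k·s ≥ 0 for all s ∈ [0, t_k], and (x1_{k+1}, v1_{k+1}, x2_{k+1}, v2_{k+1}) is the kinematic update of (x1_k, v1_k, x2_k, v2_k) over duration t_k with accelerations a1_k, a2_k. If x1_0 ≤ x2_0 and safeDist_s(v1_0, v2_0) ≤ x2_0 − x1_0, then x1_k ≤ x2_k for all k = 0,…,n. -/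
set_option maxHeartbeats 1000000 in
/-- One step of proper response preserves the invariant. -/
lemma step_prop (b B v1 v2 a1 a2 t d : ℝ) (hb : 0 < b) (hbB : b < B)
    (hv1 : 0 ≤ v1) (hv2 : 0 ≤ v2) (ht0 : 0 ≤ t)
    (hu1 : 0 ≤ v1 + a1*t) (hu2 : 0 ≤ v2 + a2*t)
    (ha1 : a1 ≤ -b ∨ (v1 = 0 ∧ a1 = 0)) (ha2 : -B ≤ a2 ∨ (v2 = 0 ∧ a2 = 0))
    (hd0 : 0 ≤ d) (hinv : B*v1^2 - b*v2^2 ≤ 2*B*b*d) :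
    0 ≤ d + (v2*t + (1/2)*a2*t^2) - (v1*t + (1/2)*a1*t^2) ∧
    B*(v1+a1*t)^2 - b*(v2+a2*t)^2 ≤
      2*B*b*(d + (v2*t + (1/2)*a2*t^2) - (v1*t + (1/2)*a1*t^2)) := by
  have hB : 0 < B := lt_trans hb hbB
  constructor
  · -- 0 ≤ d'
    rcases ha1 with ha1b | ⟨hv10, ha10⟩
    · -- a1 ≤ -b
      have hbt : b*t ≤ v1 := by nlinarith [mul_le_mul_of_nonneg_right ha1b ht0]
      rcases ha2 with ha2B | ⟨hv20, ha20⟩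
      · -- -B ≤ a2 : main case
        rcases le_or_gt (B*t) v2 with hP1 | hP2
        · -- car2 can brake at B throughout: lower bound with a2 = -B
          have hq : d + (v2*t + (1/2)*a2*t^2) - (v1*t + (1/2)*a1*t^2)
              ≥ d + (v2-v1)*t - (1/2)*(B-b)*t^2 := by nlinarith [sq_nonneg t]
          rcases le_or_gt (B*v1) (b*v2) with hba | hba
          · -- P1a
            nlinarith [mul_nonneg ht0 (sub_nonneg.2 hbt),
              mul_nonneg ht0 (sub_nonneg.2 hba), mul_nonneg ht0 hv1,
              mul_nonneg (mul_nonneg ht0 ht0) (le_of_lt hb)]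
          · -- P1b
            rcases le_or_gt ((B+b)*v2) (2*B*v1) with hc | hc
            · have e1 : 0 ≤ b*B*(B-b)*(t*(v2-B*t)) := by
                apply mul_nonneg (mul_nonneg (mul_nonneg hb.le hB.le) (by linarith)) (mul_nonneg ht0 (by linarith))
              have e2 : 0 ≤ b*((v2-B*t)*(2*B*v1-(B+b)*v2)) := by
                apply mul_nonneg hb.le (mul_nonneg (by linarith) (by linarith))
              have e3 : B*(B*v1^2-b*v2^2) ≤ B*(2*B*b*d) :=
                mul_le_mul_of_nonneg_left hinv hB.le
              nlinarith [e1, e2, e3, sq_nonneg (B*v1 - b*v2),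
                mul_pos (mul_pos hB hB) hb, hq]
            · nlinarith [mul_nonneg ht0 (le_of_lt (sub_pos.2 hc)),
                mul_nonneg ht0 (sub_nonneg.2 hP1), hq]
        · -- P2 : v2 < B*t
          have hr : d + (v2*t + (1/2)*a2*t^2) - (v1*t + (1/2)*a1*t^2)
              ≥ d + (1/2)*v2*t - v1*t + (1/2)*b*t^2 := by
            nlinarith [mul_nonneg ht0 hu2, sq_nonneg t]
          rcases le_or_gt ((2*v1-v2)^2) (8*b*d) with hP2i | hP2ii
          · nlinarith [sq_nonneg (2*b*t - 2*v1 + v2), hr, hb]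
          · -- P2ii
            have hBP2ii := mul_lt_mul_of_pos_left hP2ii hB
            have hprod : 0 < v2 * ((B+4*b)*v2 - 4*B*v1) := by nlinarith [hinv, hBP2ii]
            have hv2p : 0 < v2 := by
              by_contra h
              push_neg at h
              have hz : v2 = 0 := le_antisymm h hv2
              rw [hz] at hprod; simp at hprod
            have hX : 0 < (B+4*b)*v2 - 4*B*v1 := by
              by_contra h
              push_neg at h
              have := mul_nonpos_of_nonneg_of_nonpos hv2 h
              linarith
            have hQpos : 0 < 2*b*v2 + B*v2 - 2*B*v1 := by
              nlinarith [mul_nonneg hB.le hv2]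
            have hPQd : 0 ≤ (2*b*B*t - 2*B*v1 + B*v2) - (2*b*v2 + B*v2 - 2*B*v1) := by
              nlinarith [mul_nonneg hb.le (le_of_lt (sub_pos.2 hP2))]
            have f3 : 0 ≤ ((2*b*B*t - 2*B*v1 + B*v2) - (2*b*v2 + B*v2 - 2*B*v1)) *
                ((2*b*B*t - 2*B*v1 + B*v2) + (2*b*v2 + B*v2 - 2*B*v1)) :=
              mul_nonneg hPQd (by linarith)
            have f4 : 0 ≤ B*(8*B*b*d - 4*B*v1^2 + 4*b*v2^2) :=
              mul_nonneg hB.le (by linarith)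
            nlinarith [f3, f4, sq_nonneg (b*v2 - B*v1), hr,
              mul_pos (mul_pos hb hB) hB]
      · -- v2 = 0, a2 = 0
        subst hv20 ha20
        have g1 : b*t*(v1+(v1+a1*t)) ≤ (v1-(v1+a1*t))*(v1+(v1+a1*t)) := by
          apply mul_le_mul_of_nonneg_right _ (by linarith)
          nlinarith [mul_le_mul_of_nonneg_right ha1b ht0]
        have g2 : v1^2 ≤ 2*b*d := by
          have h' : B*v1^2 ≤ B*(2*b*d) := by nlinarith
          exact le_of_mul_le_mul_left h' hB
        nlinarith [g1, g2, sq_nonneg (v1+a1*t), hb]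
    · -- v1 = 0, a1 = 0
      subst hv10 ha10
      nlinarith [mul_nonneg ht0 (add_nonneg hv2 hu2)]
  · -- invariant propagation
    have h1 : 0 ≤ -(B*b + B*a1) * (t*(v1 + (v1 + a1*t))) := by
      rcases ha1 with ha1b | ⟨hv10, ha10⟩
      · have : B*a1 ≤ -(B*b) := by nlinarith
        exact mul_nonneg (by linarith) (mul_nonneg ht0 (by linarith))
      · subst hv10 ha10; simp
    have h2 : 0 ≤ (B*b + b*a2) * (t*(v2 + (v2 + a2*t))) := by
      rcases ha2 with ha2B | ⟨hv20, ha20⟩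
      · have : -(B*b) ≤ b*a2 := by nlinarith
        exact mul_nonneg (by linarith) (mul_nonneg ht0 (by linarith))
      · subst hv20 ha20; simp
    nlinarith [h1, h2]

set_option maxHeartbeats 1000000 in
/-- One step of free driving (safe distance held at start) gives the invariant. -/
lemma step_free (b B amax ρ v1 v2 a1 a2 t d : ℝ) (hb : 0 < b) (hbB : b < B)
    (hamax : 0 < amax) (hρ : 0 < ρ)
    (hv1 : 0 ≤ v1) (hv2 : 0 ≤ v2) (ht0 : 0 ≤ t) (htρ : t ≤ ρ)
    (hu1 : 0 ≤ v1 + a1*t) (hu2 : 0 ≤ v2 + a2*t)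
    (ha1 : a1 ≤ amax) (ha2 : -B ≤ a2)
    (hd0 : 0 ≤ d)
    (hbr : 2*B*b*(v1*ρ + (1/2)*amax*ρ^2) + B*(v1+ρ*amax)^2 - b*v2^2 ≤ 2*B*b*d) :
    0 ≤ d + (v2*t + (1/2)*a2*t^2) - (v1*t + (1/2)*a1*t^2) ∧
    B*(v1+a1*t)^2 - b*(v2+a2*t)^2 ≤
      2*B*b*(d + (v2*t + (1/2)*a2*t^2) - (v1*t + (1/2)*a1*t^2)) := by
  have hB : 0 < B := lt_trans hb hbB
  have hq0 : 0 ≤ v1 + ρ*amax := by nlinarith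
  have hdist1 : v1*t + (1/2)*a1*t^2 ≤ v1*ρ + (1/2)*amax*ρ^2 := by
    nlinarith [mul_nonneg hv1 (sub_nonneg.2 htρ),
      mul_le_mul_of_nonneg_right ha1 (sq_nonneg t),
      mul_nonneg hamax.le (mul_nonneg (sub_nonneg.2 htρ) (by linarith : (0:ℝ) ≤ ρ + t))]
  have hu1q : v1 + a1*t ≤ v1 + ρ*amax := by
    nlinarith [mul_le_mul_of_nonneg_right ha1 ht0, mul_nonneg hamax.le (sub_nonneg.2 htρ)]
  have hu1sq : (v1+a1*t)^2 ≤ (v1+ρ*amax)^2 := by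
    nlinarith [mul_self_le_mul_self hu1 hu1q]
  have hdist2B : v2^2 - (v2+a2*t)^2 ≤ 2*B*(v2*t + (1/2)*a2*t^2) := by
    nlinarith [mul_le_mul_of_nonneg_right
      (by nlinarith [mul_le_mul_of_nonneg_right ha2 ht0] : v2 - (v2+a2*t) ≤ B*t)
      (add_nonneg hv2 hu2)]
  have hdist2nn : 0 ≤ v2*t + (1/2)*a2*t^2 := by
    nlinarith [mul_nonneg ht0 (add_nonneg hv2 hu2)]
  have hmain : B*(v1+ρ*amax)^2 - b*(v2+a2*t)^2 ≤
      2*B*b*(d + (v2*t + (1/2)*a2*t^2) - (v1*t + (1/2)*a1*t^2)) := by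
    nlinarith [mul_le_mul_of_nonneg_left hdist1 (by positivity : (0:ℝ) ≤ 2*B*b),
      mul_le_mul_of_nonneg_left hdist2B hb.le]
  constructor
  · rcases le_or_gt (b*(v2+a2*t)^2) (B*(v1+ρ*amax)^2) with hF2 | hF2
    · nlinarith [hmain, mul_pos (mul_pos hB hb) (by norm_num : (0:ℝ) < 2)]
    · rcases le_or_gt (b*v2^2) (B*(v1+ρ*amax)^2) with hF1 | hF1
      · -- use dist2 ≥ 0
        nlinarith [mul_le_mul_of_nonneg_left hdist1 (by positivity : (0:ℝ) ≤ 2*B*b),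
          mul_le_mul_of_nonneg_left hdist2nn (by positivity : (0:ℝ) ≤ 2*B*b),
          mul_pos (mul_pos (by norm_num : (0:ℝ) < 2) hB) hb, hF1, hbr]
      · -- F3 : both faster than q, distance does not shrink
        have hqlt2 : v1 + ρ*amax < v2 + a2*t := by
          by_contra h
          push_neg at h
          nlinarith [mul_self_le_mul_self hu2 h]
        have hqlt1 : v1 + ρ*amax < v2 := by
          by_contra h
          push_neg at h
          nlinarith [mul_self_le_mul_self hv2 h]
        nlinarith [mul_nonneg ht0
          (by nlinarith : (0:ℝ) ≤ (v2 + (v2+a2*t)) - (v1 + (v1+a1*t)))]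
  · nlinarith [hmain, mul_le_mul_of_nonneg_left hu1sq hB.le]



/-- RSS same-direction safe distance. -/
noncomputable def safeDistS (aminBrake amaxBrake amaxAccel ρ v1 v2 : ℝ) : ℝ :=
  max (v1 * ρ + (1/2) * amaxAccel * ρ^2 + (v1 + ρ * amaxAccel)^2 / (2 * aminBrake)
    - v2^2 / (2 * amaxBrake)) 0

set_option maxHeartbeats 2000000 in
/-- Same Longitudinal Safety (Theorem 1). -/
theorem same_longitudinal_safety
    (aminBrake amaxBrake amaxAccel ρ : ℝ)
    (hmin : 0 < aminBrake) (hminmax : aminBrake < amaxBrake)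
    (hacc : 0 < amaxAccel) (hρ : 0 < ρ)
    (n : ℕ) (x1 v1 x2 v2 : ℕ → ℝ)
    (hstep : ∀ k < n, ∃ a1 a2 t : ℝ, 0 ≤ t ∧ t ≤ ρ ∧
      ((safeDistS aminBrake amaxBrake amaxAccel ρ (v1 k) (v2 k) ≤ x2 k - x1 k ∧
        -amaxBrake ≤ a1 ∧ a1 ≤ amaxAccel ∧ -amaxBrake ≤ a2 ∧ a2 ≤ amaxAccel) ∨
       (safeDistS aminBrake amaxBrake amaxAccel ρ (v1 k) (v2 k) ≥ x2 k - x1 k ∧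
        (a1 ≤ -aminBrake ∨ (v1 k = 0 ∧ a1 = 0)) ∧
        (a2 ≥ -amaxBrake ∨ (v2 k = 0 ∧ a2 = 0)))) ∧
      (∀ s : ℝ, 0 ≤ s → s ≤ t → v1 k + a1 * s ≥ 0 ∧ v2 k + a2 * s ≥ 0) ∧
      x1 (k+1) = x1 k + v1 k * t + (1/2) * a1 * t^2 ∧
      v1 (k+1) = v1 k + a1 * t ∧
      x2 (k+1) = x2 k + v2 k * t + (1/2) * a2 * t^2 ∧
      v2 (k+1) = v2 k + a2 * t)
    (hinit1 : x1 0 ≤ x2 0)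
    (hinit2 : safeDistS aminBrake amaxBrake amaxAccel ρ (v1 0) (v2 0) ≤ x2 0 - x1 0) :
    ∀ k ≤ n, x1 k ≤ x2 k := by
  set b := aminBrake
  set B := amaxBrake
  set A := amaxAccel
  have hB : 0 < B := lt_trans hmin hminmax
  rcases Nat.eq_zero_or_pos n with hn0 | hnpos
  · subst hn0
    intro k hk
    interval_cases k
    exact hinit1
  -- expansion identity for the bracket
  have hexp : ∀ w1 w2 : ℝ, 2*B*b*(w1 * ρ + (1/2) * A * ρ^2 + (w1 + ρ * A)^2 / (2 * b)
      - w2^2 / (2 * B)) = 2*B*b*(w1*ρ + (1/2)*A*ρ^2) + B*(w1+ρ*A)^2 - b*w2^2 := by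
    intro w1 w2
    field_simp
  have h2Bb : (0:ℝ) < 2*B*b := by positivity
  -- invariant
  set Inv : ℕ → Prop := fun k => 0 ≤ x2 k - x1 k ∧
      B*(v1 k)^2 - b*(v2 k)^2 ≤ 2*B*b*(x2 k - x1 k) with hInv
  have hbr_of_safe : ∀ k, safeDistS b B A ρ (v1 k) (v2 k) ≤ x2 k - x1 k →
      2*B*b*(v1 k*ρ + (1/2)*A*ρ^2) + B*(v1 k+ρ*A)^2 - b*(v2 k)^2
        ≤ 2*B*b*(x2 k - x1 k) := by
    intro k hk
    have h1 : v1 k * ρ + (1/2) * A * ρ^2 + (v1 k + ρ * A)^2 / (2 * b)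
        - (v2 k)^2 / (2 * B) ≤ x2 k - x1 k := le_trans (le_max_left _ _) hk
    have h2 := mul_le_mul_of_nonneg_left h1 h2Bb.le
    rw [hexp (v1 k) (v2 k)] at h2
    linarith
  have hInv0 : Inv 0 := by
    obtain ⟨a1, a2, t, ht0, htρ, hbranch, hs, hrest⟩ := hstep 0 hnpos
    have hv10 : 0 ≤ v1 0 := by have := (hs 0 le_rfl ht0).1; simpa using this
    have hv20 : 0 ≤ v2 0 := by have := (hs 0 le_rfl ht0).2; simpa using this
    have hd0 : 0 ≤ x2 0 - x1 0 := le_trans (le_max_right _ _) hinit2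
    have hbr := hbr_of_safe 0 hinit2
    refine ⟨hd0, ?_⟩
    nlinarith [mul_nonneg (mul_nonneg h2Bb.le hv10) hρ.le,
      mul_nonneg h2Bb.le (mul_nonneg hacc.le (sq_nonneg ρ)),
      mul_nonneg hB.le (mul_nonneg (mul_nonneg hρ.le hacc.le)
        (by nlinarith : (0:ℝ) ≤ 2*v1 0 + ρ*A))]
  have hkey : ∀ k, k < n → Inv k → Inv (k+1) := by
    intro k hk ⟨hd0, hinv⟩
    obtain ⟨a1, a2, t, ht0, htρ, hbranch, hs, hx1', hv1', hx2', hv2'⟩ := hstep k hk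
    have hv1k : 0 ≤ v1 k := by have := (hs 0 le_rfl ht0).1; simpa using this
    have hv2k : 0 ≤ v2 k := by have := (hs 0 le_rfl ht0).2; simpa using this
    have hu1 : 0 ≤ v1 k + a1*t := (hs t ht0 le_rfl).1
    have hu2 : 0 ≤ v2 k + a2*t := (hs t ht0 le_rfl).2
    have hstep' : 0 ≤ (x2 k - x1 k) + (v2 k*t + (1/2)*a2*t^2) - (v1 k*t + (1/2)*a1*t^2) ∧
        B*(v1 k+a1*t)^2 - b*(v2 k+a2*t)^2 ≤
          2*B*b*((x2 k - x1 k) + (v2 k*t + (1/2)*a2*t^2) - (v1 k*t + (1/2)*a1*t^2)) := by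
      rcases hbranch with ⟨hsafe, ha1l, ha1u, ha2l, ha2u⟩ | ⟨hsafe, ha1, ha2⟩
      · exact step_free b B A ρ (v1 k) (v2 k) a1 a2 t (x2 k - x1 k) hmin hminmax
          hacc hρ hv1k hv2k ht0 htρ hu1 hu2 ha1u ha2l
          (le_trans (le_max_right _ _) hsafe) (hbr_of_safe k hsafe)
      · exact step_prop b B (v1 k) (v2 k) a1 a2 t (x2 k - x1 k) hmin hminmax
          hv1k hv2k ht0 hu1 hu2 ha1 ha2 hd0 hinv
    constructor
    · rw [hx1', hx2']
      linarith [hstep'.1]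
    · rw [hx1', hx2', hv1', hv2']
      linarith [hstep'.2]
  have hInvAll : ∀ k, k ≤ n → Inv k := by
    intro k
    induction k with
    | zero => intro _; exact hInv0
    | succ m ih =>
      intro hm
      exact hkey m (by omega) (ih (by omega))
  intro k hk
  linarith [(hInvAll k hk).1]
end

section
/- Same Longitudinal Optimality, trajectory form (Theorem 2 on optimality): Suppose v1 ≥ 0, v2 ≥ 0, x1 ≤ x2, ε > 0, and x2 − x1 = safeDist_s(v1, v2) − ε. Define the rear-car worst-case trajectory X1(t) by: X1(t) = x1 + v1·t + (1/2)·a_maxAccel·t² for 0 ≤ t ≤ ρ; X1(t) = X1(ρ) + V·(t − ρ) − (1/2)·a_minBrake·(t − ρ)² for ρ ≤ t ≤ ρ + V/a_minBrake, where V = v1 + ρ·a_maxAccel; and X1(t) = X1(ρ + V/a_minBrake) for t ≥ ρ + V/a_minBrake. Define the front-car trajectory X2(t) by: X2(t) = x2 + v2·t − (1/2)·a_maxBrake·t² for 0 ≤ t ≤ v2/a_maxBrake, and X2(t) = x2 + v2²/(2·a_maxBrake) for t ≥ v2/a_maxBrake. Then there exists a time T ≥ 0 with X1(T) > X2(T),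 i.e., the cars collide. -/
/-- Rear-car worst-case trajectory: accelerate at `amaxAccel` for time `ρ`,
then brake at rate `aminBrake` until stopped, then remain stopped. -/
noncomputable def X1traj (aminBrake amaxAccel ρ x1 v1 : ℝ) (t : ℝ) : ℝ :=
  if t ≤ ρ then x1 + v1 * t + (1/2) * amaxAccel * t^2
  else if t ≤ ρ + (v1 + ρ * amaxAccel) / aminBrake then
    (x1 + v1 * ρ + (1/2) * amaxAccel * ρ^2) + (v1 + ρ * amaxAccel) * (t - ρ)
      - (1/2) * aminBrake * (t - ρ)^2
  else
    (x1 + v1 * ρ + (1/2) * amaxAccel * ρ^2)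
      + (v1 + ρ * amaxAccel) * ((v1 + ρ * amaxAccel) / aminBrake)
      - (1/2) * aminBrake * ((v1 + ρ * amaxAccel) / aminBrake)^2

/-- Front-car trajectory: brake at rate `amaxBrake` until stopped, then remain stopped. -/
noncomputable def X2traj (amaxBrake x2 v2 : ℝ) (t : ℝ) : ℝ :=
  if t ≤ v2 / amaxBrake then x2 + v2 * t - (1/2) * amaxBrake * t^2
  else x2 + v2^2 / (2 * amaxBrake)

/-- Same Longitudinal Optimality, trajectory form. -/
theorem same_longitudinal_optimality_trajectory
    (aminBrake amaxBrake amaxAccel ρ : ℝ)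
    (hmin : 0 < aminBrake) (hminmax : aminBrake < amaxBrake)
    (hacc : 0 < amaxAccel) (hρ : 0 < ρ)
    (x1 x2 v1 v2 ε : ℝ)
    (hv1 : v1 ≥ 0) (hv2 : v2 ≥ 0) (hx : x1 ≤ x2) (hε : ε > 0)
    (hdist : x2 - x1 = safeDistS aminBrake amaxBrake amaxAccel ρ v1 v2 - ε) :
    ∃ T : ℝ, T ≥ 0 ∧ X1traj aminBrake amaxAccel ρ x1 v1 T > X2traj amaxBrake x2 v2 T := by
  set V := v1 + ρ * amaxAccel with hV
  have hmax : (0:ℝ) < amaxBrake := lt_trans hmin hminmax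
  have hVpos : 0 < V := by positivity
  set T := max (ρ + V / aminBrake) (v2 / amaxBrake) with hT
  have hT1 : ρ + V / aminBrake ≤ T := le_max_left _ _
  have hT2 : v2 / amaxBrake ≤ T := le_max_right _ _
  have hTρ : ρ < T := by
    have : 0 < V / aminBrake := by positivity
    linarith
  refine ⟨T, by positivity, ?_⟩
  have h1 : X1traj aminBrake amaxAccel ρ x1 v1 T
      = (x1 + v1 * ρ + (1/2) * amaxAccel * ρ^2) + V^2 / (2 * aminBrake) := by
    unfold X1traj
    rw [if_neg (not_le.mpr hTρ), ← hV]
    split_ifs with h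
    · have hTeq : T = ρ + V / aminBrake := le_antisymm h hT1
      rw [hTeq]
      field_simp
      ring
    · field_simp
      ring
  have h2 : X2traj amaxBrake x2 v2 T = x2 + v2^2 / (2 * amaxBrake) := by
    unfold X2traj
    split_ifs with h
    · have hTeq : T = v2 / amaxBrake := le_antisymm h hT2
      rw [hTeq]
      field_simp
      ring
    · rfl
  rw [h1, h2]
  set E := v1 * ρ + (1/2) * amaxAccel * ρ^2 + V^2 / (2 * aminBrake) - v2^2 / (2 * amaxBrake)
    with hE
  have hsd : safeDistS aminBrake amaxBrake amaxAccel ρ v1 v2 = max E 0 := rfl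
  have hEeq : safeDistS aminBrake amaxBrake amaxAccel ρ v1 v2 = E := by
    rcases le_or_gt 0 E with hE0 | hE0
    · rw [hsd, max_eq_left hE0]
    · exfalso
      have : safeDistS aminBrake amaxBrake amaxAccel ρ v1 v2 = 0 := by
        rw [hsd, max_eq_right hE0.le]
      linarith [hdist, this]
  rw [hEeq] at hdist
  rw [hE] at hdist
  linarith
end

section
/- Loop-invariant base case, same direction: If v1 ≥ 0 and safeDist_s(v1, v2) ≤ x2 − x1, then the same-direction loop invariant holds in its stopping-distance part: x1 + v1²/(2·a_minBrake) ≤ x2 + v2²/(2·a_maxBrake). -/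
/-- Loop-invariant base case, same direction. -/
theorem loop_invariant_base_same
    (aminBrake amaxBrake amaxAccel ρ : ℝ)
    (hmin : 0 < aminBrake) (hminmax : aminBrake < amaxBrake)
    (hacc : 0 < amaxAccel) (hρ : 0 < ρ)
    (x1 x2 v1 v2 : ℝ)
    (hv1 : v1 ≥ 0)
    (hdist : safeDistS aminBrake amaxBrake amaxAccel ρ v1 v2 ≤ x2 - x1) :
    x1 + v1^2 / (2 * aminBrake) ≤ x2 + v2^2 / (2 * amaxBrake) := by
  have h := le_trans (le_max_left _ 0) hdist
  have h1 : v1^2 / (2 * aminBrake) ≤ (v1 + ρ * amaxAccel)^2 / (2 * aminBrake) := by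
    apply div_le_div_of_nonneg_right _ (by linarith)
    nlinarith [mul_pos hρ hacc, mul_nonneg hv1 (mul_pos hρ hacc).le]
  nlinarith [mul_pos hρ hacc]
end

section
/- Loop-invariant preservation under free driving, same direction (inductive step of Theorem 1, case safeDist_s(v1, v2) ≤ x2 − x1): Suppose v1 ≥ 0, v2 ≥ 0, x1 ≤ x2, safeDist_s(v1, v2) ≤ x2 − x1, −a_maxBrake ≤ a1 ≤ a_maxAccel, −a_maxBrake ≤ a2 ≤ a_maxAccel, 0 ≤ t ≤ ρ, and v1 + a1·s ≥ 0 and v2 + a2·s ≥ 0 for all s ∈ [0, t]. Let (x̃1, ṽ1, x̃2, ṽ2) be the kinematic update of (x1, v1, x2, v2) over duration t with accelerations a1, a2. Then x̃1 ≤ x̃2 and x̃1 + ṽ1²/(2·a_minBrake) ≤ x̃2 + ṽ2²/(2·a_maxBrake). -/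
set_option maxHeartbeats 1000000


private lemma sqrt_mono_aux {p q : ℝ} (hp : 0 ≤ p) (hq : 0 ≤ q) (h : p^2 ≤ q^2) : p ≤ q := by
  nlinarith

/-- Loop-invariant preservation under free driving, same direction. -/
theorem loop_invariant_free_driving_same
    (aminBrake amaxBrake amaxAccel ρ : ℝ)
    (hmin : 0 < aminBrake) (hminmax : aminBrake < amaxBrake)
    (hacc : 0 < amaxAccel) (hρ : 0 < ρ)
    (x1 x2 v1 v2 a1 a2 t : ℝ)
    (hv1 : v1 ≥ 0) (hv2 : v2 ≥ 0) (hx : x1 ≤ x2)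
    (hdist : safeDistS aminBrake amaxBrake amaxAccel ρ v1 v2 ≤ x2 - x1)
    (ha1l : -amaxBrake ≤ a1) (ha1u : a1 ≤ amaxAccel)
    (ha2l : -amaxBrake ≤ a2) (ha2u : a2 ≤ amaxAccel)
    (ht0 : 0 ≤ t) (htρ : t ≤ ρ)
    (hvpos : ∀ s : ℝ, 0 ≤ s → s ≤ t → v1 + a1 * s ≥ 0 ∧ v2 + a2 * s ≥ 0) :
    x1 + v1 * t + (1/2) * a1 * t^2 ≤ x2 + v2 * t + (1/2) * a2 * t^2 ∧
    (x1 + v1 * t + (1/2) * a1 * t^2) + (v1 + a1 * t)^2 / (2 * aminBrake)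
      ≤ (x2 + v2 * t + (1/2) * a2 * t^2) + (v2 + a2 * t)^2 / (2 * amaxBrake) := by
  have hB : (0:ℝ) < amaxBrake := lt_trans hmin hminmax
  have hb2 : (0:ℝ) < 2 * aminBrake := by linarith
  have hB2 : (0:ℝ) < 2 * amaxBrake := by linarith
  have hv1t : v1 + a1 * t ≥ 0 := (hvpos t ht0 le_rfl).1
  have hv2t : v2 + a2 * t ≥ 0 := (hvpos t ht0 le_rfl).2
  have hD : v1 * ρ + (1/2) * amaxAccel * ρ^2 + (v1 + ρ * amaxAccel)^2 / (2 * aminBrake)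
      - v2^2 / (2 * amaxBrake) ≤ x2 - x1 :=
    le_trans (le_max_left _ _) hdist
  have hC0 : (0:ℝ) ≤ x2 - x1 := le_trans (le_max_right _ _) hdist
  -- basic bounds
  have hat : a1 * t ≤ ρ * amaxAccel := by
    nlinarith [mul_le_mul_of_nonneg_right ha1u ht0, mul_le_mul_of_nonneg_left htρ hacc.le]
  have hA1 : v1 * t ≤ v1 * ρ := mul_le_mul_of_nonneg_left htρ hv1
  have ht2 : t^2 ≤ ρ^2 := by nlinarith
  have hA2 : (1/2) * a1 * t^2 ≤ (1/2) * amaxAccel * ρ^2 := by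
    nlinarith [mul_le_mul_of_nonneg_right ha1u (sq_nonneg t),
      mul_le_mul_of_nonneg_left ht2 hacc.le]
  have hsq1 : (v1 + a1 * t)^2 ≤ (v1 + ρ * amaxAccel)^2 := by
    have h1 : v1 + a1 * t ≤ v1 + ρ * amaxAccel := by linarith
    nlinarith [hv1t]
  have hdiv1 : (v1 + a1 * t)^2 / (2 * aminBrake) ≤ (v1 + ρ * amaxAccel)^2 / (2 * aminBrake) := by
    gcongr
  -- h1: rear car's stopping point bound
  have h1 : v1 * t + (1/2) * a1 * t^2 + (v1 + a1 * t)^2 / (2 * aminBrake)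
      ≤ v1 * ρ + (1/2) * amaxAccel * ρ^2 + (v1 + ρ * amaxAccel)^2 / (2 * aminBrake) := by
    linarith
  -- front car braking identity fact
  have hprod : 0 ≤ t * (2 * v2 + a2 * t) * (amaxBrake + a2) := by
    apply mul_nonneg (mul_nonneg ht0 (by linarith)) (by linarith)
  have hkey : v2^2 - (v2 + a2 * t)^2 ≤ (v2 * t + (1/2) * a2 * t^2) * (2 * amaxBrake) := by
    have hid : (v2 * t + (1/2) * a2 * t^2) * (2 * amaxBrake) - (v2^2 - (v2 + a2 * t)^2)
        = t * (2 * v2 + a2 * t) * (amaxBrake + a2) := by ring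
    linarith
  have h2 : v2^2 / (2 * amaxBrake) - (v2 + a2 * t)^2 / (2 * amaxBrake)
      ≤ v2 * t + (1/2) * a2 * t^2 := by
    rw [div_sub_div_same, div_le_iff₀ hB2]
    exact hkey
  -- second goal
  have goal2 : (x1 + v1 * t + (1/2) * a1 * t^2) + (v1 + a1 * t)^2 / (2 * aminBrake)
      ≤ (x2 + v2 * t + (1/2) * a2 * t^2) + (v2 + a2 * t)^2 / (2 * amaxBrake) := by
    linarith [h1, h2, hD]
  refine ⟨?_, goal2⟩
  -- first goal
  have hX2nn : 0 ≤ v2 * t + (1/2) * a2 * t^2 := by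
    nlinarith [mul_nonneg ht0 (show (0:ℝ) ≤ 2 * v2 + a2 * t by linarith)]
  have hPnn : (0:ℝ) ≤ v1 + ρ * amaxAccel := by nlinarith [mul_pos hρ hacc]
  rcases le_or_gt (v2^2) ((v1 + ρ * amaxAccel)^2 + 2 * amaxBrake * (v2 * t + (1/2) * a2 * t^2))
    with hc | hc
  · -- v2 small: use the D branch of the safe distance
    have hc' : v2^2 / (2 * amaxBrake) ≤ (v1 + ρ * amaxAccel)^2 / (2 * amaxBrake)
        + (v2 * t + (1/2) * a2 * t^2) := by
      rw [div_add' _ _ _ (ne_of_gt hB2), div_le_div_iff₀ hB2 hB2]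
      nlinarith [hc]
    have hmono : (v1 + ρ * amaxAccel)^2 / (2 * amaxBrake)
        ≤ (v1 + ρ * amaxAccel)^2 / (2 * aminBrake) := by
      apply div_le_div_of_nonneg_left (sq_nonneg _) hb2 (by linarith)
    linarith
  · -- v2 large: both v2 and v2 + a2 t exceed v1 + ρ A ≥ v1, v1 + a1 t
    have h2BX : 0 ≤ 2 * amaxBrake * (v2 * t + (1/2) * a2 * t^2) :=
      mul_nonneg (by linarith) hX2nn
    have hv2P : v1 + ρ * amaxAccel ≤ v2 :=
      sqrt_mono_aux hPnn hv2 (by linarith)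
    have hidsq : (v2 + a2 * t)^2 = v2^2 - 2 * amaxBrake * (v2 * t + (1/2) * a2 * t^2)
        + t * (2 * v2 + a2 * t) * (amaxBrake + a2) := by ring
    have hv2tP : v1 + ρ * amaxAccel ≤ v2 + a2 * t :=
      sqrt_mono_aux hPnn hv2t (by linarith [hprod])
    have hv1tP : v1 + a1 * t ≤ v1 + ρ * amaxAccel := by linarith
    have hv1P : v1 ≤ v1 + ρ * amaxAccel := by nlinarith [mul_pos hρ hacc]
    have hlin : 0 ≤ t * ((v2 + a2 * t) + v2 - (v1 + a1 * t) - v1) :=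
      mul_nonneg ht0 (by linarith)
    have hid2 : t * ((v2 + a2 * t) + v2 - (v1 + a1 * t) - v1)
        = 2 * ((v2 * t + (1/2) * a2 * t^2) - (v1 * t + (1/2) * a1 * t^2)) := by ring
    linarith [hC0, hlin, hid2]
end

section
/- Loop-invariant preservation under proper response, same direction (inductive step of Theorem 1, case safeDist_s(v1, v2) ≥ x2 − x1): Suppose v1 ≥ 0, v2 ≥ 0, x1 ≤ x2, x1 + v1²/(2·a_minBrake) ≤ x2 + v2²/(2·a_maxBrake), the accelerations satisfy (a1 ≤ −a_minBrake or (v1 = 0 and a1 = 0)) and (a2 ≥ −a_maxBrake or (v2 = 0 and a2 = 0)), 0 ≤ t ≤ ρ, and v1 + a1·s ≥ 0 and v2 + a2·s ≥ 0 for all s ∈ [0, t]. Let (x̃1, ṽ1, x̃2, ṽ2) be the kinematic update of (x1, v1, x2, v2) over duration t with accelerations a1, a2. Then x̃1 ≤ x̃2 and x̃1 + ṽ1²/(2·a_minBrake) ≤ x̃2 + ṽ2²/(2·a_maxBrake). -/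
lemma key_dec (b : ℝ) (hb : 0 < b) (x v a s : ℝ) (hv : 0 ≤ v) (hs : 0 ≤ s)
    (hvs : 0 ≤ v + a * s) (ha : a ≤ -b) :
    x + v * s + (1/2) * a * s^2 + (v + a * s)^2 / (2 * b) ≤ x + v^2 / (2 * b) := by
  have hb2 : (0:ℝ) < 2 * b := by linarith
  have hid : x + v * s + (1/2) * a * s^2 + (v + a * s)^2 / (2 * b)
      = x + v^2 / (2 * b) + s * (2*v + a*s) * (b + a) / (2 * b) := by
    field_simp; ring
  rw [hid]
  have h1 : s * (2*v + a*s) * (b + a) ≤ 0 :=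
    mul_nonpos_of_nonneg_of_nonpos (mul_nonneg hs (by linarith)) (by linarith)
  have := div_nonpos_of_nonpos_of_nonneg h1 (le_of_lt hb2)
  linarith

lemma key_inc (b : ℝ) (hb : 0 < b) (x v a s : ℝ) (hv : 0 ≤ v) (hs : 0 ≤ s)
    (hvs : 0 ≤ v + a * s) (ha : -b ≤ a) :
    x + v^2 / (2 * b) ≤ x + v * s + (1/2) * a * s^2 + (v + a * s)^2 / (2 * b) := by
  have hb2 : (0:ℝ) < 2 * b := by linarith
  have hid : x + v * s + (1/2) * a * s^2 + (v + a * s)^2 / (2 * b)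
      = x + v^2 / (2 * b) + s * (2*v + a*s) * (b + a) / (2 * b) := by
    field_simp; ring
  rw [hid]
  have h1 : 0 ≤ s * (2*v + a*s) * (b + a) :=
    mul_nonneg (mul_nonneg hs (by linarith)) (by linarith)
  have := div_nonneg h1 (le_of_lt hb2)
  linarith

/-- Loop-invariant preservation under proper response, same direction. -/
theorem loop_invariant_proper_response_same
    (aminBrake amaxBrake amaxAccel ρ : ℝ)
    (hmin : 0 < aminBrake) (hminmax : aminBrake < amaxBrake)
    (hacc : 0 < amaxAccel) (hρ : 0 < ρ)
    (x1 x2 v1 v2 a1 a2 t : ℝ)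
    (hv1 : v1 ≥ 0) (hv2 : v2 ≥ 0) (hx : x1 ≤ x2)
    (hinv : x1 + v1^2 / (2 * aminBrake) ≤ x2 + v2^2 / (2 * amaxBrake))
    (ha1 : a1 ≤ -aminBrake ∨ (v1 = 0 ∧ a1 = 0))
    (ha2 : a2 ≥ -amaxBrake ∨ (v2 = 0 ∧ a2 = 0))
    (ht0 : 0 ≤ t) (htρ : t ≤ ρ)
    (hvpos : ∀ s : ℝ, 0 ≤ s → s ≤ t → v1 + a1 * s ≥ 0 ∧ v2 + a2 * s ≥ 0) :
    x1 + v1 * t + (1/2) * a1 * t^2 ≤ x2 + v2 * t + (1/2) * a2 * t^2 ∧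
    (x1 + v1 * t + (1/2) * a1 * t^2) + (v1 + a1 * t)^2 / (2 * aminBrake)
      ≤ (x2 + v2 * t + (1/2) * a2 * t^2) + (v2 + a2 * t)^2 / (2 * amaxBrake) := by
  have hf1 : ∀ s : ℝ, 0 ≤ s → s ≤ t →
      x1 + v1 * s + (1/2) * a1 * s^2 + (v1 + a1 * s)^2 / (2 * aminBrake)
        ≤ x1 + v1^2 / (2 * aminBrake) := by
    intro s hs hst
    rcases ha1 with h | ⟨hv, ha⟩
    · exact key_dec _ hmin _ _ _ _ hv1 hs (hvpos s hs hst).1 h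
    · rw [hv, ha]; norm_num
  have hf2 : ∀ s : ℝ, 0 ≤ s → s ≤ t →
      x2 + v2^2 / (2 * amaxBrake)
        ≤ x2 + v2 * s + (1/2) * a2 * s^2 + (v2 + a2 * s)^2 / (2 * amaxBrake) := by
    intro s hs hst
    rcases ha2 with h | ⟨hv, ha⟩
    · exact key_inc _ (by linarith) _ _ _ _ hv2 hs (hvpos s hs hst).2 h
    · rw [hv, ha]; norm_num
  have hinv_s : ∀ s : ℝ, 0 ≤ s → s ≤ t →
      x1 + v1 * s + (1/2) * a1 * s^2 + (v1 + a1 * s)^2 / (2 * aminBrake)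
        ≤ x2 + v2 * s + (1/2) * a2 * s^2 + (v2 + a2 * s)^2 / (2 * amaxBrake) := by
    intro s hs hst
    exact (hf1 s hs hst).trans (hinv.trans (hf2 s hs hst))
  have hinvt := hinv_s t ht0 le_rfl
  refine ⟨?_, hinvt⟩
  rcases le_or_gt (v1 + a1 * t) (v2 + a2 * t) with hE | hE
  · rcases le_or_gt v1 v2 with hF | hF
    · -- gap nondecreasing
      nlinarith [mul_nonneg ht0 (show (0:ℝ) ≤ (v2 - v1) + ((v2 + a2*t) - (v1 + a1*t)) by linarith)]
    · -- interior minimum case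
      have ha21 : 0 < a2 - a1 := by nlinarith
      set S : ℝ := (v1 - v2) / (a2 - a1) with hSdef
      have hS : (a2 - a1) * S = v1 - v2 := by
        rw [hSdef]; field_simp [ha21.ne']
      have hS0 : 0 ≤ S := div_nonneg (by linarith) (by linarith)
      have hSt : S ≤ t := by
        rw [hSdef, div_le_iff₀ ha21]; nlinarith
      have hVeq : v1 + a1 * S = v2 + a2 * S := by linarith [hS]
      have hq : (v2 + a2 * S)^2 / (2 * amaxBrake) ≤ (v1 + a1 * S)^2 / (2 * aminBrake) := by
        rw [hVeq]
        exact div_le_div_of_nonneg_left (sq_nonneg _) (by linarith) (by linarith)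
      have hgapS : x1 + v1 * S + (1/2) * a1 * S^2 ≤ x2 + v2 * S + (1/2) * a2 * S^2 := by
        have := hinv_s S hS0 hSt
        linarith
      have hid : (x2 + v2*t + (1/2)*a2*t^2) - (x1 + v1*t + (1/2)*a1*t^2)
          = ((x2 + v2*S + (1/2)*a2*S^2) - (x1 + v1*S + (1/2)*a1*S^2))
            + (1/2)*(a2-a1)*(t-S)^2 := by
        linear_combination (t - S) * hS
      nlinarith [mul_nonneg (le_of_lt ha21) (sq_nonneg (t - S))]
  · -- final velocities: v1+a1t ≥ v2+a2t ≥ 0, use invariant at t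
    have h2t : 0 ≤ v2 + a2 * t := (hvpos t ht0 le_rfl).2
    have hsq : (v2 + a2 * t)^2 ≤ (v1 + a1 * t)^2 := pow_le_pow_left₀ h2t hE.le 2
    have hq : (v2 + a2 * t)^2 / (2 * amaxBrake) ≤ (v1 + a1 * t)^2 / (2 * aminBrake) :=
      div_le_div₀ (sq_nonneg _) hsq (by linarith) (by linarith)
    linarith
end

section
/- Front-car progress cut, same direction: If v2 ≥ 0, t ≥ 0, a_maxBrake > 0, a2 ≥ −a_maxBrake, and v2 + a2·t ≥ 0, then v2·t + (1/2)·a2·t² + (v2 + a2·t)²/(2·a_maxBrake) ≥ v2²/(2·a_maxBrake); i.e., the distance traveled plus the remaining maximal-braking stopping distance is at least the initial maximal-braking stopping distance. -/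
/-- Front-car progress cut, same direction. -/
theorem front_car_progress_cut
    (v2 a2 t amaxBrake : ℝ)
    (hv2 : v2 ≥ 0) (ht0 : t ≥ 0) (hmax : amaxBrake > 0)
    (ha2 : a2 ≥ -amaxBrake) (hvt : v2 + a2 * t ≥ 0) :
    v2 * t + (1/2) * a2 * t^2 + (v2 + a2 * t)^2 / (2 * amaxBrake)
      ≥ v2^2 / (2 * amaxBrake) := by
  rw [ge_iff_le, div_le_iff₀ (by linarith)]
  have key : t * (amaxBrake + a2) * (v2 + (v2 + a2 * t)) ≥ 0 := by
    apply mul_nonneg (mul_nonneg ht0 (by linarith)) (by linarith)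
  have h2 : (v2 + a2 * t)^2 / (2 * amaxBrake) * (2 * amaxBrake) = (v2 + a2 * t)^2 := by
    field_simp
  nlinarith [sq_nonneg (v2 + a2 * t)]
end

section
/- Rear-car braking cut, proper response: If v1 ≥ 0, t ≥ 0, a_minBrake > 0, a1 ≤ −a_minBrake, and v1 + a1·t ≥ 0, then v1·t + (1/2)·a1·t² + (v1 + a1·t)²/(2·a_minBrake) ≤ v1²/(2·a_minBrake); i.e., when decelerating at rate at least a_minBrake, the distance traveled plus the remaining minimum-braking stopping distance never exceeds the initial minimum-braking stopping distance. -/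
/-- Rear-car braking cut, proper response. -/
theorem rear_car_braking_cut
    (v1 a1 t aminBrake : ℝ)
    (hv1 : v1 ≥ 0) (ht0 : t ≥ 0) (hmin : aminBrake > 0)
    (ha1 : a1 ≤ -aminBrake) (hvt : v1 + a1 * t ≥ 0) :
    v1 * t + (1/2) * a1 * t^2 + (v1 + a1 * t)^2 / (2 * aminBrake)
      ≤ v1^2 / (2 * aminBrake) := by
  rw [← sub_nonneg]
  have h2a : (0:ℝ) < 2 * aminBrake := by positivity
  have key : v1 ^ 2 / (2 * aminBrake) - (v1 * t + 1 / 2 * a1 * t ^ 2 + (v1 + a1 * t) ^ 2 / (2 * aminBrake)) = (t * ((-aminBrake - a1) * (2 * v1 + a1 * t))) / (2 * aminBrake) := by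
    field_simp
    ring
  rw [key]
  apply div_nonneg _ h2a.le
  exact mul_nonneg ht0 (mul_nonneg (by linarith) (by linarith))
end

section
/- Backward-car braking cut, opposite-direction proper response: If v2 ≤ 0, t ≥ 0, a_minBrake > 0, a2 ≥ a_minBrake, and v2 + a2·t ≤ 0, then (v2 + a2·t)²/(2·a_minBrake) − (v2·t + (1/2)·a2·t²) ≤ v2²/(2·a_minBrake); i.e., when the backward-moving car decelerates at rate at least a_minBrake, its furthest backward reach x2 + v2·t + (1/2)·a2·t² − (v2 + a2·t)²/(2·a_minBrake) never drops below the initial furthest backward reach x2 − v2²/(2·a_minBrake). -/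
/-- Backward-car braking cut, opposite-direction proper response. -/
theorem backward_car_braking_cut
    (v2 a2 t aminBrake : ℝ)
    (hv2 : v2 ≤ 0) (ht0 : t ≥ 0) (hmin : aminBrake > 0)
    (ha2 : a2 ≥ aminBrake) (hvt : v2 + a2 * t ≤ 0) :
    (v2 + a2 * t)^2 / (2 * aminBrake) - (v2 * t + (1/2) * a2 * t^2)
      ≤ v2^2 / (2 * aminBrake) := by
  rw [div_sub' (by positivity), div_le_div_iff₀ (by positivity) (by positivity)]
  nlinarith [mul_nonneg ht0 (sub_nonneg.2 ha2), mul_nonpos_of_nonneg_of_nonpos (mul_nonneg ht0 (sub_nonneg.2 ha2)) (by linarith : v2 + (v2 + a2*t) ≤ 0)]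
end

section
/- Order preservation during proper-response braking, same direction: Suppose a_minBrake > 0, a_maxBrake ≥ a_minBrake, v1 ≥ 0, v2 ≥ 0, x1 ≤ x2, and x1 + v1²/(2·a_minBrake) ≤ x2 + v2²/(2·a_maxBrake). Suppose a1 ≤ −a_minBrake (or v1 = 0 and a1 = 0) and a2 ≥ −a_maxBrake (or v2 = 0 and a2 = 0), and let t ≥ 0 be such that v1 + a1·s ≥ 0 and v2 + a2·s ≥ 0 for all s ∈ [0, t]. Then for every s ∈ [0, t], x1 + v1·s + (1/2)·a1·s² ≤ x2 + v2·s + (1/2)·a2·s²; i.e., the rear car never passes the front car at any intermediate time of the braking maneuver. -/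
/-- Key monotonicity lemma: the "stopping-point" quantity (cleared of denominators)
is ordered at any time σ where both velocities are still nonnegative. -/
lemma key_stop (amin amax v1 v2 a1 a2 x1 x2 σ : ℝ)
    (h1 : 0 < amin) (h2 : 0 < amax) (hσ : 0 ≤ σ)
    (hw1 : 0 ≤ v1 + a1 * σ) (hw2 : 0 ≤ v2 + a2 * σ)
    (hv1 : 0 ≤ v1) (hv2 : 0 ≤ v2)
    (ha1 : a1 ≤ -amin) (ha2 : -amax ≤ a2)
    (hinv' : 2*amin*amax*x1 + amax*v1^2 ≤ 2*amin*amax*x2 + amin*v2^2) :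
    2*amin*amax*(x1 + v1*σ + a1*σ^2/2) + amax*(v1 + a1*σ)^2 ≤
      2*amin*amax*(x2 + v2*σ + a2*σ^2/2) + amin*(v2 + a2*σ)^2 := by
  have t1 : 0 ≤ amin*(σ*(2*v2 + a2*σ)*(amax + a2)) :=
    mul_nonneg h1.le (mul_nonneg (mul_nonneg hσ (by linarith)) (by linarith))
  have t2 : 0 ≤ amax*(σ*(2*v1 + a1*σ)*(-(amin + a1))) :=
    mul_nonneg h2.le (mul_nonneg (mul_nonneg hσ (by linarith)) (by linarith))
  linarith [t1, t2, hinv']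

/-- Order preservation during proper-response braking, same direction. -/
theorem order_preservation_proper_response_same
    (aminBrake amaxBrake : ℝ)
    (hmin : 0 < aminBrake) (hminmax : aminBrake ≤ amaxBrake)
    (x1 x2 v1 v2 a1 a2 t : ℝ)
    (hv1 : v1 ≥ 0) (hv2 : v2 ≥ 0) (hx : x1 ≤ x2)
    (hinv : x1 + v1^2 / (2 * aminBrake) ≤ x2 + v2^2 / (2 * amaxBrake))
    (ha1 : a1 ≤ -aminBrake ∨ (v1 = 0 ∧ a1 = 0))
    (ha2 : a2 ≥ -amaxBrake ∨ (v2 = 0 ∧ a2 = 0))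
    (ht0 : t ≥ 0)
    (hvpos : ∀ s : ℝ, 0 ≤ s → s ≤ t → v1 + a1 * s ≥ 0 ∧ v2 + a2 * s ≥ 0) :
    ∀ s : ℝ, 0 ≤ s → s ≤ t →
      x1 + v1 * s + (1/2) * a1 * s^2 ≤ x2 + v2 * s + (1/2) * a2 * s^2 := by
  intro s hs0 hst
  have hmax : 0 < amaxBrake := lt_of_lt_of_le hmin hminmax
  have hpos : (0:ℝ) < 2*aminBrake*amaxBrake := by positivity
  obtain ⟨hw1, hw2⟩ := hvpos s hs0 hst
  rcases ha1 with ha1 | ⟨hv10, ha10⟩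
  swap
  · -- v1 = 0, a1 = 0 : car 1 stays put, car 2 moves forward
    subst hv10 ha10
    have := mul_nonneg hs0 (by linarith : (0:ℝ) ≤ 2*v2 + a2*s)
    linarith
  -- main case: a1 ≤ -aminBrake, and a2 ≥ -amaxBrake in all cases
  have ha2' : -amaxBrake ≤ a2 := by
    rcases ha2 with h | ⟨_, h⟩
    · exact h
    · rw [h]; linarith
  -- clear denominators in the invariant
  have hinv' : 2*aminBrake*amaxBrake*x1 + amaxBrake*v1^2 ≤
      2*aminBrake*amaxBrake*x2 + aminBrake*v2^2 := by
    have h := mul_le_mul_of_nonneg_left hinv (le_of_lt hpos)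
    have e1 : 2*aminBrake*amaxBrake*(x1 + v1^2 / (2 * aminBrake)) =
        2*aminBrake*amaxBrake*x1 + amaxBrake*v1^2 := by
      field_simp
    have e2 : 2*aminBrake*amaxBrake*(x2 + v2^2 / (2 * amaxBrake)) =
        2*aminBrake*amaxBrake*x2 + aminBrake*v2^2 := by
      field_simp
    rw [e1, e2] at h
    exact h
  by_cases hcase : aminBrake*(v2 + a2*s)^2 ≤ amaxBrake*(v1 + a1*s)^2
  · -- stopping-distance bound for car 1 dominates
    have hk := key_stop aminBrake amaxBrake v1 v2 a1 a2 x1 x2 s hmin hmax hs0 hw1 hw2 hv1 hv2 ha1 ha2' hinv'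
    have h3 : 2*aminBrake*amaxBrake*(x1 + v1*s + (1/2)*a1*s^2) ≤
        2*aminBrake*amaxBrake*(x2 + v2*s + (1/2)*a2*s^2) := by linarith [hk, hcase]
    exact le_of_mul_le_mul_left h3 hpos
  push_neg at hcase
  have hw21 : v1 + a1*s ≤ v2 + a2*s := by
    by_contra h
    push_neg at h
    have h1 : (v2 + a2*s)^2 ≤ (v1 + a1*s)^2 := by nlinarith
    have h2 := mul_le_mul_of_nonneg_left h1 hmax.le
    have h3 : 0 ≤ (amaxBrake - aminBrake) * (v2 + a2*s)^2 :=
      mul_nonneg (by linarith) (sq_nonneg _)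
    linarith
  by_cases hv21 : v1 ≤ v2
  · -- velocities ordered throughout: trapezoid rule
    have := mul_nonneg hs0 (by linarith : (0:ℝ) ≤ (v2 - v1) + ((v2 + a2*s) - (v1 + a1*s)))
    nlinarith
  push_neg at hv21
  -- v2 < v1 but v2 + a2·s ≥ v1 + a1·s : velocities cross at σ ∈ (0, s]
  have hda : 0 < a2 - a1 := by
    rcases lt_or_eq_of_le hs0 with hs | hs
    · nlinarith
    · exfalso; rw [← hs] at hw21; simp at hw21; linarith
  set σ := (v1 - v2) / (a2 - a1) with hσdef
  have hσ0 : 0 ≤ σ := div_nonneg (by linarith) hda.le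
  have hσs : σ ≤ s := by
    rw [hσdef, div_le_iff₀ hda]; linarith
  have hcross : v1 + a1*σ = v2 + a2*σ := by
    rw [hσdef]; field_simp; ring
  have hs0' : 0 < s := by
    rcases lt_or_eq_of_le hs0 with h | h
    · exact h
    · exfalso
      have hσ0' : σ = 0 := le_antisymm (by rw [← h] at hσs; exact hσs) hσ0
      rw [hσ0'] at hcross; simp at hcross; linarith
  have hw1σ : 0 ≤ v1 + a1*σ := by
    have k1 : 0 ≤ (s - σ) * v1 := mul_nonneg (by linarith) hv1
    have k2 : 0 ≤ σ * (v1 + a1*s) := mul_nonneg hσ0 hw1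
    nlinarith [hs0', k1, k2]
  have hw2σ : 0 ≤ v2 + a2*σ := hcross ▸ hw1σ
  have hk := key_stop aminBrake amaxBrake v1 v2 a1 a2 x1 x2 σ hmin hmax hσ0 hw1σ hw2σ hv1 hv2 ha1 ha2' hinv'
  -- at σ the two velocities are equal, so the gap at σ is nonnegative
  have heq : aminBrake*(v2 + a2*σ)^2 ≤ amaxBrake*(v1 + a1*σ)^2 := by
    rw [← hcross]
    have := mul_nonneg (by linarith : (0:ℝ) ≤ amaxBrake - aminBrake) (sq_nonneg (v1 + a1*σ))
    linarith
  have hψσ : x1 + v1*σ + (1/2)*a1*σ^2 ≤ x2 + v2*σ + (1/2)*a2*σ^2 := by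
    have h3 : 2*aminBrake*amaxBrake*(x1 + v1*σ + (1/2)*a1*σ^2) ≤
        2*aminBrake*amaxBrake*(x2 + v2*σ + (1/2)*a2*σ^2) := by linarith [hk, heq]
    exact le_of_mul_le_mul_left h3 hpos
  -- from σ to s the gap only grows (trapezoid rule, velocity diff nonneg at both ends)
  have htrap : 0 ≤ (s - σ) * (((v2 + a2*s) - (v1 + a1*s)) + ((v2 + a2*σ) - (v1 + a1*σ))) :=
    mul_nonneg (by linarith) (by linarith [hcross])
  linarith [hψσ, htrap]
end
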